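/- arXiv:1206.6319 — 9 statements merged into one kernel-verified Lean document; each statement's English description precedes it below -/
import Mathlib

section
/- If A is a Conley attractor of an IFS F on a compact metric space, then F(A) = A, where F(B) = ∪_{f∈F} f(B). -/
open Set Filter Metric Topology

/-- The set map of an IFS: `F(S) = ⋃ i, fᵢ(S)`. -/
def IFSApply {ι X : Type*} (f : ι → X → X) (S : Set X) : Set X := ⋃ i, f i '' S

/-- `lim_{k→∞} F^k(closure U) = A` in the Hausdorff (extended) metric. -/
def ConleyLim {ι X : Type*} [MetricSpace X] (f : ι → X → X) (U A : Set X) : Prop :=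
  Filter.Tendsto (fun k => EMetric.hausdorffEdist ((IFSApply f)^[k] (closure U)) A)
    Filter.atTop (nhds 0)

/-- A compact set `A` is a Conley attractor of the IFS `f` if there is an open `U ⊇ A`
with `A = lim_{k→∞} F^k(closure U)`. -/
def IsConleyAttractor {ι X : Type*} [MetricSpace X] (f : ι → X → X) (A : Set X) : Prop :=
  IsCompact A ∧ ∃ U : Set X, IsOpen U ∧ A ⊆ U ∧ ConleyLim f U A

/-- The basin of a Conley attractor: the union of all open sets `U` as in the definition. -/
def conleyBasin {ι X : Type*} [MetricSpace X] (f : ι → X → X) (A : Set X) : Set X :=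
  ⋃₀ {U : Set X | IsOpen U ∧ A ⊆ U ∧ ConleyLim f U A}

/-- `lim_{k→∞} F^k(S) = A` in the Hausdorff (extended) metric. -/
def IFSLim {ι X : Type*} [MetricSpace X] (f : ι → X → X) (S A : Set X) : Prop :=
  Filter.Tendsto (fun k => EMetric.hausdorffEdist ((IFSApply f)^[k] S) A)
    Filter.atTop (nhds 0)

/-- `A` is a strict attractor of the IFS `f`. -/
def IsStrictAttractor {ι X : Type*} [MetricSpace X] (f : ι → X → X) (A : Set X) : Prop :=
  A.Nonempty ∧ IsCompact A ∧ IFSApply f A = A ∧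
  ∃ U : Set X, IsOpen U ∧ A ⊆ U ∧
    ∀ S : Set X, S.Nonempty → IsCompact S → S ⊆ U → IFSLim f S A

/-- The basin of a strict attractor: the largest open `U` with
`lim_{k→∞} F^k(S) = A` for all nonempty compact `S ⊆ U`. -/
def strictBasin {ι X : Type*} [MetricSpace X] (f : ι → X → X) (A : Set X) : Set X :=
  ⋃₀ {U : Set X | IsOpen U ∧
    ∀ S : Set X, S.Nonempty → IsCompact S → S ⊆ U → IFSLim f S A}


open ENNReal in
private lemma ifs_unif {ι X : Type*} [MetricSpace X] [CompactSpace X] [Fintype ι] [Nonempty ι]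
    (f : ι → X → X) (hf : ∀ i, Continuous (f i)) {ε : ENNReal} (hε : 0 < ε) :
    ∃ δ : ENNReal, 0 < δ ∧ ∀ i (x y : X), edist x y < δ → edist (f i x) (f i y) < ε := by
  have h : ∀ i : ι, ∃ δ : ENNReal, 0 < δ ∧ ∀ x y : X, edist x y < δ → edist (f i x) (f i y) < ε := by
    intro i
    have huc := CompactSpace.uniformContinuous_of_continuous (hf i)
    rw [EMetric.uniformContinuous_iff] at huc
    obtain ⟨δ, hδ, h⟩ := huc ε hε
    exact ⟨δ, hδ, fun x y hxy => h hxy⟩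
  choose δ hδ hδ' using h
  refine ⟨Finset.univ.inf' Finset.univ_nonempty δ, ?_, ?_⟩
  · rw [Finset.lt_inf'_iff]
    exact fun i _ => hδ i
  · intro i x y hxy
    exact hδ' i x y (hxy.trans_le (Finset.inf'_le _ (Finset.mem_univ i)))

private lemma ifs_step {ι X : Type*} [MetricSpace X] (f : ι → X → X) {δ ε : ENNReal}
    (h : ∀ i (x y : X), edist x y < δ → edist (f i x) (f i y) < ε) {S T : Set X}
    (hST : EMetric.hausdorffEdist S T < δ) :
    EMetric.hausdorffEdist (IFSApply f S) (IFSApply f T) ≤ ε := by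
  have main : ∀ (S T : Set X), EMetric.hausdorffEdist S T < δ →
      ∀ z ∈ IFSApply f S, ∃ w ∈ IFSApply f T, edist z w ≤ ε := by
    intro S T hST z hz
    simp only [IFSApply, Set.mem_iUnion] at hz
    obtain ⟨i, x, hx, rfl⟩ := hz
    obtain ⟨y, hy, hxy⟩ := EMetric.exists_edist_lt_of_hausdorffEdist_lt hx hST
    exact ⟨f i y, Set.mem_iUnion.2 ⟨i, Set.mem_image_of_mem _ hy⟩, (h i x y hxy).le⟩
  exact EMetric.hausdorffEdist_le_of_mem_edist (main S T hST)
    (main T S (by unfold EMetric.hausdorffEdist at hST ⊢; rwa [EMetric.hausdorffEdist_comm]))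

theorem conley_attractor_invariant {ι X : Type*} [MetricSpace X] [CompactSpace X]
    [Fintype ι] [Nonempty ι] (f : ι → X → X) (hf : ∀ i, Continuous (f i))
    (A : Set X) (hA : IsConleyAttractor f A) :
    IFSApply f A = A := by
  obtain ⟨hAc, U, hU, hAU, hlim⟩ := hA
  have hgA : IsCompact (IFSApply f A) := isCompact_iUnion fun i => hAc.image (hf i)
  rw [← EMetric.hausdorffEdist_zero_iff_eq_of_closed hgA.isClosed hAc.isClosed]
  set d := EMetric.hausdorffEdist (IFSApply f A) A with hd
  have key : ∀ ε : ENNReal, 0 < ε → d ≤ ε := by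
    intro ε hε
    have hε2 : (0 : ENNReal) < ε / 2 := ENNReal.half_pos hε.ne'
    obtain ⟨δ, hδ, hδ'⟩ := ifs_unif f hf hε2
    have hev : ∀ᶠ k in atTop,
        EMetric.hausdorffEdist ((IFSApply f)^[k] (closure U)) A < min δ (ε / 2) :=
      hlim.eventually (gt_mem_nhds (lt_min hδ hε2))
    obtain ⟨N, hN⟩ := eventually_atTop.1 hev
    set C := (IFSApply f)^[N] (closure U) with hC
    have h1 : EMetric.hausdorffEdist C A < min δ (ε / 2) := hN N le_rfl
    have h2 : EMetric.hausdorffEdist ((IFSApply f)^[N + 1] (closure U)) A < min δ (ε / 2) :=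
      hN (N + 1) (Nat.le_succ N)
    rw [Function.iterate_succ_apply', ← hC] at h2
    have hAC : EMetric.hausdorffEdist A C < δ := by
      unfold EMetric.hausdorffEdist; rw [EMetric.hausdorffEdist_comm]
      exact h1.trans_le (min_le_left _ _)
    calc d ≤ EMetric.hausdorffEdist (IFSApply f A) (IFSApply f C)
            + EMetric.hausdorffEdist (IFSApply f C) A :=
          EMetric.hausdorffEdist_triangle
      _ ≤ ε / 2 + ε / 2 :=
          add_le_add (ifs_step f hδ' hAC) ((h2.trans_le (min_le_right _ _)).le)
      _ = ε := ENNReal.add_halves ε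
  by_contra hd0
  have hdpos : 0 < d := pos_iff_ne_zero.2 hd0
  have hdlt : d ≤ 1 := key 1 one_pos
  have : d ≤ d / 2 := key (d / 2) (ENNReal.half_pos hd0)
  exact absurd this (not_le.2 (ENNReal.half_lt_self hd0 (lt_of_le_of_lt hdlt ENNReal.one_lt_top).ne))
end

section
/- If A and A' are Conley attractors of an IFS F on a compact metric space, then A ∪ A' is a Conley attractor of F. -/
open Set Filter Metric Topology

lemma IFSApply_union {ι X : Type*} (f : ι → X → X) (S T : Set X) :
    IFSApply f (S ∪ T) = IFSApply f S ∪ IFSApply f T := by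
  simp [IFSApply, Set.image_union, Set.iUnion_union_distrib]

lemma IFSApply_iterate_union {ι X : Type*} (f : ι → X → X) (S T : Set X) (k : ℕ) :
    (IFSApply f)^[k] (S ∪ T) = (IFSApply f)^[k] S ∪ (IFSApply f)^[k] T := by
  induction k with
  | zero => simp
  | succ n ih => simp [Function.iterate_succ_apply', ih, IFSApply_union]

lemma hausdorffEdist_union_le {X : Type*} [PseudoEMetricSpace X] (s s' t t' : Set X) :
    EMetric.hausdorffEdist (s ∪ s') (t ∪ t') ≤
      max (EMetric.hausdorffEdist s t) (EMetric.hausdorffEdist s' t') := by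
  apply EMetric.hausdorffEdist_le_of_infEdist
  · rintro x (hx | hx)
    · exact le_trans (EMetric.infEdist_anti Set.subset_union_left)
        (le_trans (EMetric.infEdist_le_hausdorffEdist_of_mem hx) (le_max_left _ _))
    · exact le_trans (EMetric.infEdist_anti Set.subset_union_right)
        (le_trans (EMetric.infEdist_le_hausdorffEdist_of_mem hx) (le_max_right _ _))
  · rintro x (hx | hx)
    · calc EMetric.infEdist x (s ∪ s') ≤ EMetric.infEdist x s :=
            EMetric.infEdist_anti Set.subset_union_left
        _ ≤ EMetric.hausdorffEdist t s := EMetric.infEdist_le_hausdorffEdist_of_mem hx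
        _ = EMetric.hausdorffEdist s t := EMetric.hausdorffEdist_comm
        _ ≤ _ := le_max_left _ _
    · calc EMetric.infEdist x (s ∪ s') ≤ EMetric.infEdist x s' :=
            EMetric.infEdist_anti Set.subset_union_right
        _ ≤ EMetric.hausdorffEdist t' s' := EMetric.infEdist_le_hausdorffEdist_of_mem hx
        _ = EMetric.hausdorffEdist s' t' := EMetric.hausdorffEdist_comm
        _ ≤ _ := le_max_right _ _

theorem conley_attractor_union {ι X : Type*} [MetricSpace X] [CompactSpace X]
    [Fintype ι] [Nonempty ι] (f : ι → X → X) (hf : ∀ i, Continuous (f i))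
    (A A' : Set X) (hA : IsConleyAttractor f A) (hA' : IsConleyAttractor f A') :
    IsConleyAttractor f (A ∪ A') := by
  obtain ⟨hcA, U, hU, hAU, hlim⟩ := hA
  obtain ⟨hcA', U', hU', hAU', hlim'⟩ := hA'
  refine ⟨hcA.union hcA', U ∪ U', hU.union hU',
    Set.union_subset_union hAU hAU', ?_⟩
  unfold ConleyLim
  have hcl : closure (U ∪ U') = closure U ∪ closure U' := closure_union
  have hbound : ∀ k : ℕ,
      EMetric.hausdorffEdist ((IFSApply f)^[k] (closure (U ∪ U'))) (A ∪ A') ≤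
        max (EMetric.hausdorffEdist ((IFSApply f)^[k] (closure U)) A)
            (EMetric.hausdorffEdist ((IFSApply f)^[k] (closure U')) A') := by
    intro k
    rw [hcl, IFSApply_iterate_union]
    exact hausdorffEdist_union_le _ _ _ _
  have hmax : Filter.Tendsto (fun k =>
      max (EMetric.hausdorffEdist ((IFSApply f)^[k] (closure U)) A)
          (EMetric.hausdorffEdist ((IFSApply f)^[k] (closure U')) A'))
      Filter.atTop (nhds 0) := by
    simpa using hlim.max hlim'
  exact tendsto_of_tendsto_of_tendsto_of_le_of_le tendsto_const_nhds hmax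
    (fun k => zero_le) hbound
end

section
/- If A is a strict attractor of an IFS F on a compact metric space with basin B, then A is a Conley attractor of F. -/
open Set Filter Metric Topology

theorem strict_attractor_is_conley {ι X : Type*} [MetricSpace X] [CompactSpace X]
    [Fintype ι] [Nonempty ι] (f : ι → X → X) (hf : ∀ i, Continuous (f i))
    (A : Set X) (hA : IsStrictAttractor f A) :
    IsConleyAttractor f A := by
  obtain ⟨hne, hcomp, hfix, U, hUopen, hAU, hU⟩ := hA
  obtain ⟨V, hVopen, hAV, hVU⟩ :=
    normal_exists_closure_subset hcomp.isClosed hUopen hAU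
  refine ⟨hcomp, V, hVopen, hAV, ?_⟩
  exact hU (closure V) (hne.mono (hAV.trans subset_closure))
    isClosed_closure.isCompact hVU
end

section
/- If A is a Conley attractor of an IFS F with basin B, and S is any compact set with A ⊆ S ⊆ B, then lim_{k→∞} F^k(S) = A in the Hausdorff metric. -/
open Set Filter Metric Topology

open EMetric ENNReal

set_option linter.unusedSectionVars false

section
variable {ι X : Type*} [MetricSpace X] [CompactSpace X] [Fintype ι] [Nonempty ι]
variable (f : ι → X → X)

lemma ifs_mono : Monotone (IFSApply f) := fun _ _ h =>
  iUnion_mono fun _ => image_mono h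

lemma ifs_compact {s : Set X} (hf : ∀ i, Continuous (f i)) (hs : IsCompact s) :
    IsCompact (IFSApply f s) :=
  isCompact_iUnion fun i => hs.image (hf i)

lemma ifs_uc (hf : ∀ i, Continuous (f i)) {ε : ℝ≥0∞} (hε : 0 < ε) :
    ∃ δ > 0, ∀ s t : Set X, hausdorffEdist s t < δ →
      hausdorffEdist (IFSApply f s) (IFSApply f t) ≤ ε := by
  have huc : ∀ i, ∃ δ > (0 : ℝ≥0∞), ∀ {a b : X}, edist a b < δ → edist (f i a) (f i b) < ε :=
    fun i => EMetric.uniformContinuous_iff.mp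
      (CompactSpace.uniformContinuous_of_continuous (hf i)) ε hε
  choose δ hδpos hδ using huc
  refine ⟨Finset.univ.inf' Finset.univ_nonempty δ, ?_, ?_⟩
  · exact (Finset.lt_inf'_iff _).2 fun i _ => hδpos i
  · intro s t hst
    have key : ∀ s t : Set X, hausdorffEdist s t < Finset.univ.inf' Finset.univ_nonempty δ →
        ∀ x ∈ IFSApply f s, infEdist x (IFSApply f t) ≤ ε := by
      intro s t hst x hx
      obtain ⟨i, y, hy, rfl⟩ := by simpa [IFSApply] using hx
      have h1 : infEdist y t < δ i :=
        lt_of_le_of_lt (infEdist_le_hausdorffEdist_of_mem hy)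
          (hst.trans_le (Finset.inf'_le _ (Finset.mem_univ i)))
      obtain ⟨z, hz, hyz⟩ := infEdist_lt_iff.mp h1
      have : f i z ∈ IFSApply f t := mem_iUnion.2 ⟨i, mem_image_of_mem _ hz⟩
      exact (infEdist_le_edist_of_mem this).trans (hδ i hyz).le
    exact hausdorffEdist_le_of_infEdist (key s t hst)
      (key t s (by rw [hausdorffEdist, hausdorffEDist_comm]; exact hst))

lemma ifs_fixed (hf : ∀ i, Continuous (f i)) {A : Set X}
    (hA : IsCompact A) {U : Set X}
    (hlim : Tendsto (fun k => hausdorffEdist ((IFSApply f)^[k] (closure U)) A) atTop (𝓝 0)) :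
    IFSApply f A = A := by
  set C : ℕ → Set X := fun k => (IFSApply f)^[k] (closure U) with hC
  have h1 : Tendsto (fun k => hausdorffEdist (IFSApply f A) (IFSApply f (C k))) atTop (𝓝 0) := by
    rw [ENNReal.tendsto_nhds_zero]
    intro ε hε
    obtain ⟨δ, hδ, hδ'⟩ := ifs_uc f hf hε
    filter_upwards [hlim.eventually (gt_mem_nhds hδ)] with k hk
    rw [hausdorffEdist, hausdorffEDist_comm]
    exact hδ' _ _ hk
  have h2 : Tendsto (fun k => hausdorffEdist (IFSApply f (C k)) A) atTop (𝓝 0) := by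
    have := hlim.comp (tendsto_add_atTop_nat 1)
    simpa [hC, Function.comp_def, Function.iterate_succ_apply'] using this
  have key : hausdorffEdist (IFSApply f A) A = 0 := by
    refine le_antisymm ?_ zero_le
    have htr : ∀ k, hausdorffEdist (IFSApply f A) A ≤
        hausdorffEdist (IFSApply f A) (IFSApply f (C k)) + hausdorffEdist (IFSApply f (C k)) A :=
      fun k => hausdorffEdist_triangle
    have := ge_of_tendsto (h1.add h2) (Eventually.of_forall htr)
    simpa using this
  exact (hausdorffEdist_zero_iff_eq_of_closed (ifs_compact f hf hA).isClosed
    hA.isClosed).mp key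
end

theorem conley_attractor_lim_of_compact_in_basin {ι X : Type*} [MetricSpace X] [CompactSpace X]
    [Fintype ι] [Nonempty ι] (f : ι → X → X) (hf : ∀ i, Continuous (f i))
    (A : Set X) (hA : IsConleyAttractor f A)
    (S : Set X) (hS : IsCompact S) (hAS : A ⊆ S) (hSB : S ⊆ conleyBasin f A) :
    IFSLim f S A := by
  classical
  obtain ⟨hAc, U₀, _, _, hlim₀⟩ := hA
  have hfix : IFSApply f A = A := ifs_fixed f hf hAc hlim₀
  have hfixk : ∀ k, (IFSApply f)^[k] A = A := by
    intro k
    induction k with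
    | zero => rfl
    | succ n ih => rw [Function.iterate_succ_apply', ih, hfix]
  -- finite subcover of S by basin sets
  set κ := {U : Set X // IsOpen U ∧ A ⊆ U ∧ ConleyLim f U A} with hκ
  have hcov : S ⊆ ⋃ U : κ, (U : Set X) := by
    intro x hx
    obtain ⟨U, hU, hxU⟩ := hSB hx
    exact mem_iUnion.2 ⟨⟨U, hU⟩, hxU⟩
  obtain ⟨J, hJ⟩ := hS.elim_finite_subcover (fun U : κ => (U : Set X))
    (fun U => U.2.1) hcov
  -- F^[k] S is contained in the union of the iterates of the closures
  have hsub : ∀ k, (IFSApply f)^[k] S ⊆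
      ⋃ U ∈ J, (IFSApply f)^[k] (closure (U : Set X)) := by
    intro k
    induction k with
    | zero =>
      exact hJ.trans (iUnion₂_mono fun U _ => subset_closure)
    | succ n ih =>
      rw [Function.iterate_succ_apply']
      refine (ifs_mono f ih).trans ?_
      intro x hx
      obtain ⟨i, y, hy, rfl⟩ := by simpa [IFSApply] using hx
      obtain ⟨U, hUJ, hyU⟩ := hy
      refine mem_iUnion₂.mpr ⟨U, hUJ, ?_⟩
      rw [Function.iterate_succ_apply']
      exact mem_iUnion.2 ⟨i, mem_image_of_mem _ hyU⟩
  -- the Hausdorff distance bound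
  have hbound : ∀ k, hausdorffEdist ((IFSApply f)^[k] S) A ≤
      ∑ U ∈ J, hausdorffEdist ((IFSApply f)^[k] (closure (U : Set X))) A := by
    intro k
    refine hausdorffEdist_le_of_infEdist ?_ ?_
    · intro x hx
      obtain ⟨U, hUJ, hxU⟩ := mem_iUnion₂.mp (hsub k hx)
      exact (infEdist_le_hausdorffEdist_of_mem hxU).trans
        (Finset.single_le_sum
          (f := fun V : κ => hausdorffEdist ((IFSApply f)^[k] (closure (V : Set X))) A)
          (fun _ _ => zero_le) hUJ)
    · intro a ha
      have hmem : a ∈ (IFSApply f)^[k] S := by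
        have : A ⊆ (IFSApply f)^[k] S := by
          rw [← hfixk k]; exact (ifs_mono f).iterate k hAS
        exact this ha
      rw [infEdist_zero_of_mem hmem]
      exact zero_le
  have hsum : Tendsto (fun k => ∑ U ∈ J,
      hausdorffEdist ((IFSApply f)^[k] (closure (U : Set X))) A) atTop (𝓝 0) := by
    have := tendsto_finset_sum J (fun (U : κ) (_ : U ∈ J) => U.2.2.2)
    simpa using this
  exact tendsto_of_tendsto_of_tendsto_of_le_of_le tendsto_const_nhds hsum
    (fun k => zero_le) hbound
end

section
/- If Q is an attractor block for an IFS F on a compact metric space (i.e., F(closure Q) ⊆ interior Q), then the sets F^k(closure Q) form a decreasing sequence, the limit lim_{k→∞} F^k(closure Q) exists in the Hausdorff metric, equals ∩_{k≥0} F^k(closure Q), and is a Conley attractor of F. -/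
open Set Filter Metric Topology

theorem attractor_block_gives_conley_attractor {ι X : Type*} [MetricSpace X] [CompactSpace X]
    [Fintype ι] [Nonempty ι] (f : ι → X → X) (hf : ∀ i, Continuous (f i))
    (Q : Set X) (hQ : IFSApply f (closure Q) ⊆ interior Q) :
    (∀ k : ℕ, (IFSApply f)^[k + 1] (closure Q) ⊆ (IFSApply f)^[k] (closure Q)) ∧
    Filter.Tendsto
      (fun k => EMetric.hausdorffEdist ((IFSApply f)^[k] (closure Q))
        (⋂ k : ℕ, (IFSApply f)^[k] (closure Q)))
      Filter.atTop (nhds 0) ∧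
    IsConleyAttractor f (⋂ k : ℕ, (IFSApply f)^[k] (closure Q)) := by
  have hmono : Monotone (IFSApply f) := fun s t hst =>
    Set.iUnion_mono fun i => Set.image_mono hst
  have hFcl : IFSApply f (closure Q) ⊆ closure Q :=
    hQ.trans (interior_subset.trans subset_closure)
  set A : ℕ → Set X := fun k => (IFSApply f)^[k] (closure Q) with hA
  have hsub : ∀ k : ℕ, A (k + 1) ⊆ A k := by
    intro k
    have := (hmono.iterate k) hFcl
    simpa [hA, Function.iterate_succ_apply] using this
  have hanti : Antitone A := antitone_nat_of_succ_le hsub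
  have hcomp : ∀ k, IsCompact (A k) := by
    intro k
    induction k with
    | zero => exact isClosed_closure.isCompact
    | succ n ih =>
      have : A (n + 1) = IFSApply f (A n) := by
        simp [hA, Function.iterate_succ_apply']
      rw [this]
      exact isCompact_iUnion fun i => ih.image (hf i)
  set Aset : Set X := ⋂ k : ℕ, A k with hAset
  have hAsub : ∀ k, Aset ⊆ A k := fun k => Set.iInter_subset A k
  have hAclosed : IsClosed Aset := isClosed_iInter fun k => (hcomp k).isClosed
  have hAcomp : IsCompact Aset := hAclosed.isCompact
  -- Key: eventually A k ⊆ {x | infEdist x Aset < ε}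
  have key : ∀ ε : ENNReal, 0 < ε → ∃ N : ℕ, ∀ k ≥ N,
      A k ⊆ {x | EMetric.infEdist x Aset < ε} := by
    intro ε hε
    set V : Set X := {x | EMetric.infEdist x Aset < ε} with hV
    have hVopen : IsOpen V := by
      have : V = (fun x => EMetric.infEdist x Aset) ⁻¹' Set.Iio ε := rfl
      rw [this]
      exact isOpen_Iio.preimage EMetric.continuous_infEdist
    by_contra h
    push_neg at h
    have hCne : ∀ n : ℕ, (A n \ V).Nonempty := by
      intro n
      obtain ⟨k, hk, hnk⟩ := h n
      obtain ⟨x, hx⟩ := Set.not_subset.mp hnk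
      exact ⟨x, hanti hk hx.1, hx.2⟩
    have hCsub : ∀ n : ℕ, A (n + 1) \ V ⊆ A n \ V :=
      fun n => Set.diff_subset_diff_left (hsub n)
    have hCcl : ∀ n : ℕ, IsClosed (A n \ V) :=
      fun n => (hcomp n).isClosed.sdiff hVopen
    have hne : (⋂ n, A n \ V).Nonempty :=
      IsCompact.nonempty_iInter_of_sequence_nonempty_isCompact_isClosed
        (fun n => A n \ V) hCsub hCne ((hcomp 0).of_isClosed_subset (hCcl 0)
          Set.diff_subset) hCcl
    obtain ⟨x, hx⟩ := hne
    have hxA : x ∈ Aset := Set.mem_iInter.mpr fun n => (Set.mem_iInter.mp hx n).1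
    have hxV : x ∈ V := by
      simp only [hV, Set.mem_setOf_eq, EMetric.infEdist_zero_of_mem hxA]
      exact lt_of_le_of_lt (le_of_eq (EMetric.infEdist_zero_of_mem hxA)) hε
    exact (Set.mem_iInter.mp hx 0).2 hxV
  -- generic convergence lemma
  have conv : ∀ B : ℕ → Set X, (∀ k, Aset ⊆ B k) → (∀ k, B k ⊆ A k) →
      Filter.Tendsto (fun k => EMetric.hausdorffEdist (B k) Aset) Filter.atTop (nhds 0) := by
    intro B hlow hup
    rw [ENNReal.tendsto_nhds_zero]
    intro ε hε
    obtain ⟨N, hN⟩ := key ε hε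
    filter_upwards [Filter.eventually_ge_atTop N] with k hk
    apply EMetric.hausdorffEdist_le_of_infEdist
    · intro x hx
      exact le_of_lt (hN k hk (hup k hx))
    · intro x hx
      simp [EMetric.infEdist_zero_of_mem (hlow k hx)]
  refine ⟨hsub, conv A hAsub (fun k => le_refl _), hAcomp, interior Q, isOpen_interior, ?_, ?_⟩
  · exact (hAsub 1).trans (by simpa [hA, Function.iterate_one] using hQ)
  · apply conv
    · intro k
      refine (hAsub (k + 1)).trans ?_
      have h1 : IFSApply f (closure Q) ⊆ closure (interior Q) :=
        hQ.trans subset_closure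
      have := (hmono.iterate k) h1
      simpa [hA, Function.iterate_succ_apply] using this
    · intro k
      exact (hmono.iterate k) (closure_mono interior_subset)
end

section
/- A compact set A is a Conley attractor of an IFS F on a compact metric space if and only if A = ω(U) for some open set U with A ⊆ U, where ω(S) = ∩_{K≥1} closure(∪_{k≥K} F^k(S)). -/
open Set Filter Metric Topology

open scoped ENNReal
set_option linter.unusedSectionVars false
set_option linter.unusedVariables false

namespace ConleyAux

open EMetric

lemma ennreal_eq_zero_of_forall_le {a : ℝ≥0∞} (h : ∀ ε : ℝ≥0∞, 0 < ε → a ≤ ε) : a = 0 := by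
  by_contra hne
  obtain ⟨ε, h1, h2⟩ := exists_between (pos_iff_ne_zero.2 hne)
  exact absurd (h ε h1) (not_le.2 h2)

variable {ι X : Type*} [MetricSpace X] [CompactSpace X] [Fintype ι] [Nonempty ι]
variable (f : ι → X → X)

lemma apply_mono {S T : Set X} (h : S ⊆ T) : IFSApply f S ⊆ IFSApply f T :=
  Set.iUnion_mono fun i => Set.image_mono h

lemma iter_mono (k : ℕ) {S T : Set X} (h : S ⊆ T) :
    (IFSApply f)^[k] S ⊆ (IFSApply f)^[k] T := by
  induction k generalizing S T with
  | zero => simpa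
  | succ n ih =>
    rw [Function.iterate_succ_apply, Function.iterate_succ_apply]
    exact ih (apply_mono f h)

lemma apply_isCompact (hf : ∀ i, Continuous (f i)) {S : Set X} (hS : IsCompact S) : IsCompact (IFSApply f S) :=
  isCompact_iUnion fun i => hS.image (hf i)

lemma apply_closure_subset (hf : ∀ i, Continuous (f i)) (S : Set X) :
    IFSApply f (closure S) ⊆ closure (IFSApply f S) :=
  Set.iUnion_subset fun i =>
    (image_closure_subset_closure_image (hf i)).trans
      (closure_mono (Set.subset_iUnion (fun j => f j '' S) i))

lemma iter_closure_subset (hf : ∀ i, Continuous (f i)) (k : ℕ) (S : Set X) :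
    (IFSApply f)^[k] (closure S) ⊆ closure ((IFSApply f)^[k] S) := by
  induction k with
  | zero => simp
  | succ n ih =>
    rw [Function.iterate_succ_apply', Function.iterate_succ_apply']
    exact (apply_mono f ih).trans (apply_closure_subset f hf _)

/-- `closure (⋃_{k ≥ K} F^[k] U)`. -/
abbrev omegaSet (U : Set X) (K : ℕ) : Set X :=
  closure (⋃ k ∈ {k : ℕ | K ≤ k}, (IFSApply f)^[k] U)

lemma omegaSet_anti (U : Set X) : Antitone (omegaSet f U) := fun K L h =>
  closure_mono (Set.biUnion_subset_biUnion_left fun k hk => le_trans h hk)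

lemma isClosed_omegaSet (U : Set X) (K : ℕ) : IsClosed (omegaSet f U K) :=
  isClosed_closure

lemma iterU_subset_omegaSet (U : Set X) {K k : ℕ} (hk : K ≤ k) :
    (IFSApply f)^[k] U ⊆ omegaSet f U K :=
  (Set.subset_biUnion_of_mem (u := fun k => (IFSApply f)^[k] U) (show k ∈ {k : ℕ | K ≤ k} from hk)).trans subset_closure

lemma iter_subset_omegaSet (hf : ∀ i, Continuous (f i)) (U : Set X) {K k : ℕ} (hk : K ≤ k) :
    (IFSApply f)^[k] (closure U) ⊆ omegaSet f U K :=
  (iter_closure_subset f hf k U).trans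
    (closure_mono (Set.subset_biUnion_of_mem (u := fun k => (IFSApply f)^[k] U) (show k ∈ {k : ℕ | K ≤ k} from hk)))

lemma apply_biUnion (s : Set ℕ) (T : ℕ → Set X) :
    IFSApply f (⋃ k ∈ s, T k) = ⋃ k ∈ s, IFSApply f (T k) := by
  ext x
  simp only [IFSApply, Set.mem_iUnion, Set.mem_image, exists_prop]
  tauto

lemma apply_omegaSet_subset (hf : ∀ i, Continuous (f i)) (U : Set X) (K : ℕ) :
    IFSApply f (omegaSet f U K) ⊆ omegaSet f U (K + 1) := by
  have hsub : IFSApply f (⋃ k ∈ {k : ℕ | K ≤ k}, (IFSApply f)^[k] U)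
      ⊆ omegaSet f U (K + 1) := by
    rw [apply_biUnion]
    refine Set.iUnion₂_subset fun k hk => ?_
    have he : IFSApply f ((IFSApply f)^[k] U) = (IFSApply f)^[k + 1] U :=
      (Function.iterate_succ_apply' _ _ _).symm
    rw [he]
    exact iterU_subset_omegaSet f U (Nat.succ_le_succ hk)
  exact (apply_closure_subset f hf _).trans
    ((closure_mono hsub).trans (isClosed_omegaSet f U (K + 1)).closure_eq.subset)

lemma omegaSet_succ_subset (hf : ∀ i, Continuous (f i)) (U : Set X) (K : ℕ) :
    omegaSet f U (K + 1) ⊆ IFSApply f (omegaSet f U K) := by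
  have hcl : IsClosed (IFSApply f (omegaSet f U K)) :=
    (apply_isCompact f hf (isClosed_omegaSet f U K).isCompact).isClosed
  refine closure_minimal (Set.iUnion₂_subset fun k hk => ?_) hcl
  have hk' : K + 1 ≤ k := hk
  obtain ⟨m, rfl⟩ : ∃ m, k = m + 1 := ⟨k - 1, by omega⟩
  rw [Function.iterate_succ_apply']
  exact apply_mono f (iterU_subset_omegaSet f U (by omega))

lemma apply_inter_eq (hf : ∀ i, Continuous (f i)) (U : Set X) :
    IFSApply f (⋂ K, omegaSet f U K) = ⋂ K, omegaSet f U K := by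
  apply subset_antisymm
  · refine Set.subset_iInter fun K => ?_
    exact ((apply_mono f (Set.iInter_subset _ K)).trans
      (apply_omegaSet_subset f hf U K)).trans (omegaSet_anti f U (Nat.le_succ K))
  · intro x hx
    have hx' : ∀ K, x ∈ IFSApply f (omegaSet f U K) := fun K =>
      omegaSet_succ_subset f hf U K (Set.mem_iInter.1 hx (K + 1))
    have hpig : ∃ i : ι, {K : ℕ | x ∈ f i '' omegaSet f U K}.Infinite := by
      by_contra hcon
      push_neg at hcon
      have hfin : (⋃ i : ι, {K : ℕ | x ∈ f i '' omegaSet f U K}).Finite :=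
        Set.finite_iUnion hcon
      have huniv : (Set.univ : Set ℕ) ⊆ ⋃ i : ι, {K : ℕ | x ∈ f i '' omegaSet f U K} := by
        intro K _
        obtain ⟨i, hi⟩ := Set.mem_iUnion.1 (hx' K)
        exact Set.mem_iUnion.2 ⟨i, hi⟩
      exact Set.infinite_univ (hfin.subset huniv)
    obtain ⟨i, hinf⟩ := hpig
    have hall : ∀ K, x ∈ f i '' omegaSet f U K := by
      intro K
      obtain ⟨L, hL, hKL⟩ := hinf.exists_gt K
      obtain ⟨y, hy, hyx⟩ := hL
      exact ⟨y, omegaSet_anti f U hKL.le hy, hyx⟩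
    have hne : (⋂ K, omegaSet f U K ∩ f i ⁻¹' {x}).Nonempty := by
      apply IsCompact.nonempty_iInter_of_directed_nonempty_isCompact_isClosed
      · intro K L
        refine ⟨max K L, ?_, ?_⟩
        · exact Set.inter_subset_inter_left _ (omegaSet_anti f U (le_max_left _ _))
        · exact Set.inter_subset_inter_left _ (omegaSet_anti f U (le_max_right _ _))
      · intro K
        obtain ⟨y, hy, hyx⟩ := hall K
        exact ⟨y, hy, by simp [hyx]⟩
      · intro K
        exact ((isClosed_omegaSet f U K).inter
          (isClosed_singleton.preimage (hf i))).isCompact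
      · intro K
        exact (isClosed_omegaSet f U K).inter (isClosed_singleton.preimage (hf i))
    obtain ⟨y, hy⟩ := hne
    have hyA : y ∈ ⋂ K, omegaSet f U K :=
      Set.mem_iInter.2 fun K => (Set.mem_iInter.1 hy K).1
    have hyx : f i y = x := (Set.mem_iInter.1 hy 0).2
    exact Set.mem_iUnion.2 ⟨i, y, hyA, hyx⟩

lemma biInter_eq (U : Set X) :
    ⋂ K ∈ {K : ℕ | 1 ≤ K},
        closure (⋃ k ∈ {k : ℕ | K ≤ k}, (IFSApply f)^[k] U)
      = ⋂ K, omegaSet f U K := by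
  apply subset_antisymm
  · refine Set.subset_iInter fun K => ?_
    exact (Set.biInter_subset_of_mem (show K + 1 ∈ {K : ℕ | 1 ≤ K} by simp)).trans
      (omegaSet_anti f U (Nat.le_succ K))
  · exact Set.subset_iInter₂ fun K _ => Set.iInter_subset _ K

lemma eq_omega_of_conleyLim (hf : ∀ i, Continuous (f i)) {U A : Set X} (hAc : IsCompact A) (h : ConleyLim f U A) :
    A = ⋂ K, omegaSet f U K := by
  apply subset_antisymm
  · intro x hx
    refine Set.mem_iInter.2 fun K => ?_
    have h0 : EMetric.infEdist x (omegaSet f U K) = 0 := by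
      refine ennreal_eq_zero_of_forall_le fun ε hε => ?_
      obtain ⟨N, hN⟩ := Filter.eventually_atTop.1 (ENNReal.tendsto_nhds_zero.1 h ε hε)
      have h1 : EMetric.infEdist x ((IFSApply f)^[max N K] (closure U)) ≤ ε := by
        calc EMetric.infEdist x ((IFSApply f)^[max N K] (closure U))
            ≤ EMetric.hausdorffEdist A ((IFSApply f)^[max N K] (closure U)) :=
              EMetric.infEdist_le_hausdorffEdist_of_mem hx
          _ = EMetric.hausdorffEdist ((IFSApply f)^[max N K] (closure U)) A :=
              EMetric.hausdorffEdist_comm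
          _ ≤ ε := hN _ (le_max_left _ _)
      exact le_trans
        (EMetric.infEdist_anti (iter_subset_omegaSet f hf U (le_max_right N K))) h1
    have hmem := EMetric.mem_closure_iff_infEdist_zero.2 h0
    rwa [(isClosed_omegaSet f U K).closure_eq] at hmem
  · intro x hx
    have h0 : EMetric.infEdist x A = 0 := by
      refine ennreal_eq_zero_of_forall_le fun ε hε => ?_
      obtain ⟨N, hN⟩ := Filter.eventually_atTop.1 (ENNReal.tendsto_nhds_zero.1 h ε hε)
      have hW : IsClosed {z : X | EMetric.infEdist z A ≤ ε} :=
        isClosed_le EMetric.continuous_infEdist continuous_const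
      have hsub : omegaSet f U N ⊆ {z : X | EMetric.infEdist z A ≤ ε} := by
        refine closure_minimal (Set.iUnion₂_subset fun k hk => ?_) hW
        intro z hz
        have hz' : z ∈ (IFSApply f)^[k] (closure U) := iter_mono f k subset_closure hz
        exact (EMetric.infEdist_le_hausdorffEdist_of_mem hz').trans (hN k hk)
      exact hsub (Set.mem_iInter.1 hx N)
    have hmem := EMetric.mem_closure_iff_infEdist_zero.2 h0
    rwa [hAc.isClosed.closure_eq] at hmem

lemma conleyLim_of_eq_omega (hf : ∀ i, Continuous (f i)) {U A : Set X} (hAU : A ⊆ U)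
    (hA : A = ⋂ K, omegaSet f U K) : ConleyLim f U A := by
  have hinv : IFSApply f A = A := by rw [hA]; exact apply_inter_eq f hf U
  have hiter : ∀ k, (IFSApply f)^[k] A = A := by
    intro k
    induction k with
    | zero => rfl
    | succ n ih => rw [Function.iterate_succ_apply', ih, hinv]
  rw [ConleyLim, ENNReal.tendsto_nhds_zero]
  intro ε hε
  have hVo : IsOpen {z : X | EMetric.infEdist z A < ε} :=
    isOpen_lt EMetric.continuous_infEdist continuous_const
  have hAV : (⋂ K, omegaSet f U K) ⊆ {z : X | EMetric.infEdist z A < ε} := by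
    rw [← hA]
    intro z hz
    exact lt_of_eq_of_lt (EMetric.infEdist_zero_of_mem hz) hε
  obtain ⟨N, hN⟩ := exists_subset_nhds_of_compactSpace
    (V := omegaSet f U)
    (fun K L => ⟨max K L, omegaSet_anti f U (le_max_left _ _),
      omegaSet_anti f U (le_max_right _ _)⟩)
    (isClosed_omegaSet f U)
    (fun x hx => hVo.mem_nhds (hAV hx))
  filter_upwards [Filter.eventually_ge_atTop N] with k hk
  refine EMetric.hausdorffEdist_le_of_infEdist (fun z hz => ?_) (fun y hy => ?_)
  · exact le_of_lt (hN ((iter_subset_omegaSet f hf U hk) hz))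
  · have hy' : y ∈ (IFSApply f)^[k] (closure U) :=
      iter_mono f k (hAU.trans subset_closure) ((hiter k).symm ▸ hy)
    exact le_of_eq_of_le (EMetric.infEdist_zero_of_mem hy') zero_le

end ConleyAux

theorem conley_attractor_iff_omega_limit {ι X : Type*} [MetricSpace X] [CompactSpace X]
    [Fintype ι] [Nonempty ι] (f : ι → X → X) (hf : ∀ i, Continuous (f i))
    (A : Set X) (hAc : IsCompact A) :
    IsConleyAttractor f A ↔
      ∃ U : Set X, IsOpen U ∧ A ⊆ U ∧
        A = ⋂ K ∈ {K : ℕ | 1 ≤ K},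
              closure (⋃ k ∈ {k : ℕ | K ≤ k}, (IFSApply f)^[k] U) := by
  constructor
  · rintro ⟨-, U, hUo, hAU, hlim⟩
    refine ⟨U, hUo, hAU, ?_⟩
    rw [ConleyAux.biInter_eq f U]
    exact ConleyAux.eq_omega_of_conleyLim f hf hAc hlim
  · rintro ⟨U, hUo, hAU, hAeq⟩
    refine ⟨hAc, U, hUo, hAU, ?_⟩
    refine ConleyAux.conleyLim_of_eq_omega f hf hAU ?_
    rw [hAeq, ConleyAux.biInter_eq f U]
end

section
/- If Q is an attractor block with respect to an invertible IFS F on a compact metric space, then the complement X \ Q is an attractor block with respect to the inverse IFS F* = {f⁻¹ : f ∈ F}. -/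
open Set Filter Metric Topology

theorem complement_attractor_block {ι X : Type*} [MetricSpace X] [CompactSpace X]
    [Fintype ι] [Nonempty ι] (f : ι → X ≃ₜ X)
    (Q : Set X) (hQ : IFSApply (fun i => (f i : X → X)) (closure Q) ⊆ interior Q) :
    IFSApply (fun i => ((f i).symm : X → X)) (closure Qᶜ) ⊆ interior Qᶜ := by
  intro x hx
  simp only [IFSApply, mem_iUnion] at hx ⊢
  obtain ⟨i, y, hy, rfl⟩ := hx
  rw [closure_compl] at hy
  rw [interior_compl]
  intro hc
  apply hy
  have : f i ((f i).symm y) ∈ interior Q := hQ (mem_iUnion.2 ⟨i, ⟨_, hc, rfl⟩⟩)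
  simpa using this
end

section
/- Let F be an invertible IFS on a compact metric space X. Then the chain recurrent set R(F) equals the intersection over all Conley attractors A of F of the sets A ∪ A*, where A* = X \ (basin of A) is the dual repeller of A. -/
open Set Filter Metric Topology

/-- `x` is chain recurrent for the IFS `f`: for every `ε > 0` there is an `ε`-chain
from `x` back to `x`. -/
def IsChainRecurrent {ι X : Type*} [MetricSpace X] (f : ι → X → X) (x : X) : Prop :=
  ∀ ε : ℝ, 0 < ε → ∃ n : ℕ, 0 < n ∧ ∃ c : ℕ → X, c 0 = x ∧ c n = x ∧
    ∀ i < n, ∃ j : ι, dist (c (i + 1)) (f j (c i)) < ε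

set_option linter.unusedSectionVars false
set_option maxHeartbeats 1000000

namespace IFSAux

variable {ι X : Type*} [MetricSpace X] {f : ι → X → X}

lemma mem_apply {S : Set X} {y : X} :
    y ∈ IFSApply f S ↔ ∃ i, ∃ x ∈ S, f i x = y := by
  simp [IFSApply]

lemma apply_mem {S : Set X} {x : X} (hx : x ∈ S) (i : ι) : f i x ∈ IFSApply f S :=
  mem_apply.2 ⟨i, x, hx, rfl⟩

lemma apply_mono {S T : Set X} (h : S ⊆ T) : IFSApply f S ⊆ IFSApply f T := by
  intro y hy
  rcases mem_apply.1 hy with ⟨i, x, hx, rfl⟩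
  exact apply_mem (h hx) i

lemma iter_mono {S T : Set X} (h : S ⊆ T) (k : ℕ) :
    (IFSApply f)^[k] S ⊆ (IFSApply f)^[k] T := by
  induction k with
  | zero => simpa using h
  | succ k ih =>
    rw [Function.iterate_succ_apply', Function.iterate_succ_apply']
    exact apply_mono ih

lemma apply_compact [Fintype ι] (hf : ∀ i, Continuous (f i)) {S : Set X}
    (hS : IsCompact S) : IsCompact (IFSApply f S) :=
  isCompact_iUnion fun i => hS.image (hf i)

lemma iter_compact [Fintype ι] (hf : ∀ i, Continuous (f i)) {S : Set X}
    (hS : IsCompact S) (k : ℕ) : IsCompact ((IFSApply f)^[k] S) := by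
  induction k with
  | zero => simpa using hS
  | succ k ih => rw [Function.iterate_succ_apply']; exact apply_compact hf ih

lemma apply_nonempty [Nonempty ι] {S : Set X} (hS : S.Nonempty) :
    (IFSApply f S).Nonempty := by
  obtain ⟨x, hx⟩ := hS
  exact ⟨f (Classical.arbitrary ι) x, apply_mem hx _⟩

lemma iter_nonempty [Nonempty ι] {S : Set X} (hS : S.Nonempty) (k : ℕ) :
    ((IFSApply f)^[k] S).Nonempty := by
  induction k with
  | zero => simpa using hS
  | succ k ih => rw [Function.iterate_succ_apply']; exact apply_nonempty ih

lemma iter_eq_iUnion (S : Set X) (k : ℕ) :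
    (IFSApply f)^[k] S = ⋃ y ∈ S, (IFSApply f)^[k] {y} := by
  induction k with
  | zero => simp
  | succ k ih =>
    rw [Function.iterate_succ_apply', ih]
    simp only [Function.iterate_succ_apply']
    ext z
    constructor
    · intro hz
      rcases mem_apply.1 hz with ⟨i, x, hx, rfl⟩
      simp only [mem_iUnion] at hx ⊢
      rcases hx with ⟨y, hy, hxy⟩
      exact ⟨y, hy, apply_mem hxy i⟩
    · intro hz
      simp only [mem_iUnion] at hz
      rcases hz with ⟨y, hy, hzy⟩
      rcases mem_apply.1 hzy with ⟨i, x, hx, rfl⟩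
      refine apply_mem ?_ i
      simp only [mem_iUnion]
      exact ⟨y, hy, hx⟩

/-- sandwich: if `A ⊆ S ⊆ T` then `hausdorffEdist S A ≤ hausdorffEdist T A`. -/
lemma hausdorff_sandwich {A S T : Set X} (h1 : A ⊆ S) (h2 : S ⊆ T) :
    EMetric.hausdorffEdist S A ≤ EMetric.hausdorffEdist T A := by
  apply EMetric.hausdorffEdist_le_of_infEdist
  · intro y hy
    exact EMetric.infEdist_le_hausdorffEdist_of_mem (h2 hy)
  · intro a ha
    simp [EMetric.infEdist_zero_of_mem (h1 ha)]


section
variable [CompactSpace X] [Fintype ι] [Nonempty ι]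

lemma exists_mod (hf : ∀ i, Continuous (f i)) {δ : ℝ} (hδ : 0 < δ) :
    ∃ s > 0, ∀ (i : ι) (a b : X), dist a b < s → dist (f i a) (f i b) < δ := by
  have h : ∀ i : ι, ∃ s > 0, ∀ a b : X, dist a b < s → dist (f i a) (f i b) < δ := by
    intro i
    have := CompactSpace.uniformContinuous_of_continuous (hf i)
    rw [Metric.uniformContinuous_iff] at this
    rcases this δ hδ with ⟨s, hs, h⟩
    exact ⟨s, hs, fun a b hab => h hab⟩
  choose g hg hg2 using h
  refine ⟨Finset.univ.inf' Finset.univ_nonempty g, ?_, ?_⟩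
  · exact (Finset.lt_inf'_iff _).2 fun i _ => hg i
  · intro i a b hab
    exact hg2 i a b (lt_of_lt_of_le hab (Finset.inf'_le _ (Finset.mem_univ i)))

/-- Tracking lemma: an `ε`-chain of length `m` stays `δ`-close to true orbits. -/
lemma track (hf : ∀ i, Continuous (f i)) (m : ℕ) {δ : ℝ} (hδ : 0 < δ) :
    ∃ ε > 0, ∀ c : ℕ → X, (∀ i < m, ∃ j, dist (c (i + 1)) (f j (c i)) < ε) →
      ∀ r ≤ m, ∃ p ∈ (IFSApply f)^[r] {c 0}, dist (c r) p < δ := by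
  induction m generalizing δ with
  | zero =>
    refine ⟨δ, hδ, fun c _ r hr => ?_⟩
    interval_cases r
    exact ⟨c 0, by simp, by simpa using hδ⟩
  | succ m ih =>
    obtain ⟨s, hs, hmod⟩ := exists_mod hf (half_pos hδ)
    obtain ⟨ε', hε', htrack⟩ := ih (δ := min s δ) (lt_min hs hδ)
    refine ⟨min ε' (δ / 2), lt_min hε' (half_pos hδ), fun c hc r hr => ?_⟩
    have hc' : ∀ i < m, ∃ j, dist (c (i + 1)) (f j (c i)) < ε' := by
      intro i hi
      rcases hc i (hi.trans (Nat.lt_succ_self m)) with ⟨j, hj⟩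
      exact ⟨j, hj.trans_le (min_le_left _ _)⟩
    rcases Nat.lt_succ_iff_lt_or_eq.1 (Nat.lt_succ_of_le hr) with h | rfl
    · obtain ⟨p, hp, hdp⟩ := htrack c hc' r (Nat.lt_succ_iff.1 h)
      exact ⟨p, hp, hdp.trans_le (min_le_right _ _)⟩
    · obtain ⟨p, hp, hdp⟩ := htrack c hc' m le_rfl
      rcases hc m (Nat.lt_succ_self m) with ⟨j, hj⟩
      refine ⟨f j p, ?_, ?_⟩
      · rw [Function.iterate_succ_apply']
        exact apply_mem hp j
      · have h1 : dist (f j (c m)) (f j p) < δ / 2 :=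
          hmod j _ _ (hdp.trans_le (min_le_left _ _))
        have h2 : dist (c (m + 1)) (f j (c m)) < δ / 2 :=
          lt_of_lt_of_le hj (min_le_right _ _)
        calc dist (c (m + 1)) (f j p)
            ≤ dist (c (m + 1)) (f j (c m)) + dist (f j (c m)) (f j p) := dist_triangle _ _ _
          _ < δ / 2 + δ / 2 := add_lt_add h2 h1
          _ = δ := add_halves δ

/-- Orbits starting at nearby points stay close for `r` steps. -/
lemma approx (hf : ∀ i, Continuous (f i)) (r : ℕ) {σ : ℝ} (hσ : 0 < σ) :
    ∃ s > 0, ∀ y z : X, dist y z < s →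
      ∀ p ∈ (IFSApply f)^[r] {y}, ∃ q ∈ (IFSApply f)^[r] {z}, dist p q < σ := by
  induction r generalizing σ with
  | zero =>
    refine ⟨σ, hσ, fun y z hyz p hp => ?_⟩
    simp only [Function.iterate_zero_apply, mem_singleton_iff] at hp
    subst hp
    exact ⟨z, by simp, hyz⟩
  | succ r ih =>
    obtain ⟨s₁, hs₁, hmod⟩ := exists_mod hf hσ
    obtain ⟨s, hs, happ⟩ := ih hs₁
    refine ⟨s, hs, fun y z hyz p hp => ?_⟩
    rw [Function.iterate_succ_apply'] at hp
    rcases mem_apply.1 hp with ⟨i, p', hp', rfl⟩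
    obtain ⟨q', hq', hd⟩ := happ y z hyz p' hp'
    refine ⟨f i q', ?_, hmod i _ _ hd⟩
    rw [Function.iterate_succ_apply']
    exact apply_mem hq' i

/-- Hausdorff continuity of the set map. -/
lemma apply_hausdorff_cont (hf : ∀ i, Continuous (f i)) {δ : ℝ} (hδ : 0 < δ) :
    ∃ ε > 0, ∀ S T : Set X,
      EMetric.hausdorffEdist S T < ENNReal.ofReal ε →
      EMetric.hausdorffEdist (IFSApply f S) (IFSApply f T) ≤ ENNReal.ofReal δ := by
  obtain ⟨s, hs, hmod⟩ := exists_mod hf hδ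
  have key : ∀ S T : Set X, EMetric.hausdorffEdist S T < ENNReal.ofReal s →
      ∀ p ∈ IFSApply f S, EMetric.infEdist p (IFSApply f T) ≤ ENNReal.ofReal δ := by
    intro S T hST p hp
    rcases mem_apply.1 hp with ⟨i, x, hx, rfl⟩
    have h1 : EMetric.infEdist x T < ENNReal.ofReal s :=
      lt_of_le_of_lt (EMetric.infEdist_le_hausdorffEdist_of_mem hx) hST
    rcases EMetric.infEdist_lt_iff.1 h1 with ⟨t, ht, hxt⟩
    have hxt' : dist x t < s := by rwa [edist_lt_ofReal] at hxt
    have h2 : dist (f i x) (f i t) < δ := hmod i _ _ hxt'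
    calc EMetric.infEdist (f i x) (IFSApply f T)
        ≤ edist (f i x) (f i t) := EMetric.infEdist_le_edist_of_mem (apply_mem ht i)
      _ ≤ ENNReal.ofReal δ := by rw [edist_dist]; exact ENNReal.ofReal_le_ofReal h2.le
  refine ⟨s, hs, fun S T hST => ?_⟩
  apply EMetric.hausdorffEdist_le_of_infEdist
  · exact key S T hST
  · exact key T S (by show Metric.hausdorffEDist T S < _; rw [Metric.hausdorffEDist_comm]; exact hST)


lemma approx' (hf : ∀ i, Continuous (f i)) (m : ℕ) {σ : ℝ} (hσ : 0 < σ) :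
    ∃ s > 0, ∀ r ≤ m, ∀ y z : X, dist y z < s →
      ∀ p ∈ (IFSApply f)^[r] {y}, ∃ q ∈ (IFSApply f)^[r] {z}, dist p q < σ := by
  induction m with
  | zero =>
    obtain ⟨s, hs, h⟩ := approx hf 0 hσ
    exact ⟨s, hs, fun r hr => by interval_cases r; exact h⟩
  | succ m ih =>
    obtain ⟨s₁, hs₁, h₁⟩ := ih
    obtain ⟨s₂, hs₂, h₂⟩ := approx hf (m + 1) hσ
    refine ⟨min s₁ s₂, lt_min hs₁ hs₂, fun r hr y z hyz => ?_⟩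
    rcases Nat.lt_succ_iff_lt_or_eq.1 (Nat.lt_succ_of_le hr) with h | rfl
    · exact h₁ r (Nat.lt_succ_iff.1 h) y z (hyz.trans_le (min_le_left _ _))
    · exact h₂ y z (hyz.trans_le (min_le_right _ _))

/-- If `x` is not chain recurrent, there is a Conley attractor `A` with
`x ∉ A` and `x` in the basin of `A`. -/
lemma exists_attractor (hf : ∀ i, Continuous (f i)) {x : X}
    (hx : ¬ IsChainRecurrent f x) :
    ∃ A : Set X, IsConleyAttractor f A ∧ x ∉ A ∧ x ∈ conleyBasin f A := by
  rw [IsChainRecurrent] at hx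
  push_neg at hx
  obtain ⟨ε, hε, hloop⟩ := hx
  set Ω := {y | ∃ n, 0 < n ∧ ∃ c : ℕ → X, c 0 = x ∧ c n = y ∧
    ∀ i < n, ∃ j, dist (c (i + 1)) (f j (c i)) < ε} with hΩdef
  -- extending a chain by one step stays in Ω
  have hball : ∀ y ∈ Ω, ∀ (i : ι) (z : X), dist z (f i y) < ε → z ∈ Ω := by
    rintro y ⟨n, hn, c, hc0, hcn, hsteps⟩ i z hz
    refine ⟨n + 1, n.succ_pos, fun k => if k = n + 1 then z else c k, ?_, ?_, ?_⟩
    · show (if 0 = n + 1 then z else c 0) = x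
      rw [if_neg (by omega)]; exact hc0
    · show (if n + 1 = n + 1 then z else c (n + 1)) = z
      rw [if_pos rfl]
    · intro i' hi'
      rcases Nat.lt_succ_iff_lt_or_eq.1 hi' with h | rfl
      · obtain ⟨j, hj⟩ := hsteps i' h
        refine ⟨j, ?_⟩
        show dist (if i' + 1 = n + 1 then z else c (i' + 1))
          (f j (if i' = n + 1 then z else c i')) < ε
        rw [if_neg (by omega), if_neg (by omega)]
        exact hj
      · refine ⟨i, ?_⟩
        show dist (if i' + 1 = i' + 1 then z else c (i' + 1))
          (f i (if i' = i' + 1 then z else c i')) < ε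
        rw [if_pos rfl, if_neg (by omega), hcn]
        exact hz
  have hΩopen : IsOpen Ω := by
    rw [Metric.isOpen_iff]
    rintro y ⟨n, hn, c, hc0, hcn, hsteps⟩
    obtain ⟨m, rfl⟩ := Nat.exists_eq_succ_of_ne_zero hn.ne'
    obtain ⟨j, hj⟩ := hsteps m (Nat.lt_succ_self m)
    rw [hcn] at hj
    refine ⟨ε - dist y (f j (c m)), by linarith, fun z hz => ?_⟩
    rw [Metric.mem_ball] at hz
    refine ⟨m + 1, m.succ_pos, fun k => if k = m + 1 then z else c k, ?_, ?_, ?_⟩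
    · show (if 0 = m + 1 then z else c 0) = x
      rw [if_neg (by omega)]; exact hc0
    · show (if m + 1 = m + 1 then z else c (m + 1)) = z
      rw [if_pos rfl]
    · intro i' hi'
      rcases Nat.lt_succ_iff_lt_or_eq.1 hi' with h | rfl
      · obtain ⟨j', hj'⟩ := hsteps i' (Nat.lt_succ_of_lt h)
        refine ⟨j', ?_⟩
        show dist (if i' + 1 = m + 1 then z else c (i' + 1))
          (f j' (if i' = m + 1 then z else c i')) < ε
        rw [if_neg (by omega), if_neg (by omega)]
        exact hj'
      · refine ⟨j, ?_⟩
        show dist (if i' + 1 = i' + 1 then z else c (i' + 1))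
          (f j (if i' = i' + 1 then z else c i')) < ε
        rw [if_pos rfl, if_neg (by omega)]
        calc dist z (f j (c i')) ≤ dist z y + dist y (f j (c i')) := dist_triangle _ _ _
          _ < (ε - dist y (f j (c i'))) + dist y (f j (c i')) := by linarith
          _ = ε := by ring
  have hclosureF : ∀ y ∈ closure Ω, ∀ i : ι, f i y ∈ Ω := by
    intro y hy i
    obtain ⟨s, hs, hmod⟩ := exists_mod hf hε
    rcases Metric.mem_closure_iff.1 hy s hs with ⟨y', hy', hd⟩
    exact hball y' hy' i (f i y) (hmod i y y' hd)
  have hfx : ∀ i : ι, f i x ∈ Ω := by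
    intro i
    refine ⟨1, one_pos, fun k => if k = 0 then x else f i x, by simp, by simp, ?_⟩
    intro i' hi'
    interval_cases i'
    exact ⟨i, by simpa using hε⟩
  have hxΩ : x ∉ Ω := by
    rintro ⟨n, hn, c, hc0, hcn, hsteps⟩
    obtain ⟨i0, hi0, hbad⟩ := hloop n hn c hc0 hcn
    obtain ⟨j, hj⟩ := hsteps i0 hi0
    exact absurd hj (not_lt.2 (hbad j))
  set K := closure Ω with hKdef
  have hKcomp : IsCompact K := isClosed_closure.isCompact
  have hFK : IFSApply f K ⊆ Ω := by
    intro z hz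
    rcases mem_apply.1 hz with ⟨i, y, hy, rfl⟩
    exact hclosureF y hy i
  have hΩne : Ω.Nonempty := ⟨f (Classical.arbitrary ι) x, hfx _⟩
  set G := fun k => (IFSApply f)^[k] K with hGdef
  have hGsucc : ∀ k, G (k + 1) ⊆ G k := by
    intro k
    have h1 : IFSApply f K ⊆ K := hFK.trans subset_closure
    rw [hGdef]
    simp only [Function.iterate_succ_apply]
    exact iter_mono h1 k
  have hGanti : Antitone G := antitone_nat_of_succ_le hGsucc
  have hGcomp : ∀ k, IsCompact (G k) := fun k => iter_compact hf hKcomp k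
  have hGclosed : ∀ k, IsClosed (G k) := fun k => (hGcomp k).isClosed
  have hGne : ∀ k, (G k).Nonempty := fun k => iter_nonempty (hΩne.mono subset_closure) k
  set A := ⋂ k, G k with hAdef
  have hAclosed : IsClosed A := isClosed_iInter hGclosed
  have hAcomp : IsCompact A := hAclosed.isCompact
  have hAG : ∀ k, A ⊆ G k := fun k => iInter_subset G k
  have hAΩ : A ⊆ Ω := by
    refine (hAG 1).trans ?_
    rw [hGdef]
    simpa using hFK
  have hshrink : ∀ V : Set X, IsOpen V → A ⊆ V → ∃ N, ∀ k ≥ N, G k ⊆ V := by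
    intro V hV hAV
    suffices h : ∃ N, G N ⊆ V by
      obtain ⟨N, hN⟩ := h
      exact ⟨N, fun k hk => (hGanti hk).trans hN⟩
    by_contra h
    push_neg at h
    have hCne : ∀ N, (G N \ V).Nonempty := by
      intro N
      obtain ⟨a, h1, h2⟩ := Set.not_subset.1 (h N)
      exact ⟨a, h1, h2⟩
    have hdir : Directed (· ⊇ ·) (fun N => G N \ V) := by
      intro i j
      exact ⟨max i j, diff_subset_diff_left (hGanti (le_max_left i j)),
        diff_subset_diff_left (hGanti (le_max_right i j))⟩
    obtain ⟨z, hz⟩ := IsCompact.nonempty_iInter_of_directed_nonempty_isCompact_isClosed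
      (fun N => G N \ V) hdir hCne (fun N => (hGcomp N).diff hV)
      (fun N => (hGclosed N).sdiff hV)
    simp only [mem_iInter, mem_diff] at hz
    exact (hz 0).2 (hAV (by rw [hAdef]; exact mem_iInter.2 fun k => (hz k).1))
  have hGA : Filter.Tendsto (fun k => EMetric.hausdorffEdist (G k) A) atTop (nhds 0) := by
    rw [ENNReal.tendsto_atTop_zero]
    intro δ hδ
    set V := {y : X | EMetric.infEdist y A < δ} with hVdef
    have hVopen : IsOpen V := isOpen_lt EMetric.continuous_infEdist continuous_const
    have hAV : A ⊆ V := fun a ha => by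
      simp only [hVdef, mem_setOf_eq, EMetric.infEdist_zero_of_mem ha]
      exact lt_of_eq_of_lt (Metric.infEDist_zero_of_mem ha) hδ
    obtain ⟨N, hN⟩ := hshrink V hVopen hAV
    refine ⟨N, fun k hk => ?_⟩
    apply EMetric.hausdorffEdist_le_of_infEdist
    · exact fun y hy => (hN k hk hy).le
    · intro a ha
      simp [EMetric.infEdist_zero_of_mem (hAG k ha)]
  have hattr : IsConleyAttractor f A := by
    refine ⟨hAcomp, Ω, hΩopen, hAΩ, ?_⟩
    exact hGA
  -- the basin neighborhood around x
  have hWopen : IsOpen (⋂ i, f i ⁻¹' Ω) :=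
    isOpen_iInter_of_finite fun i => hΩopen.preimage (hf i)
  have hxW : x ∈ ⋂ i, f i ⁻¹' Ω := mem_iInter.2 fun i => hfx i
  obtain ⟨δ, hδ, hδball⟩ := Metric.isOpen_iff.1 hWopen x hxW
  set U' := Ω ∪ Metric.ball x (δ / 2) with hU'def
  have hU'open : IsOpen U' := hΩopen.union Metric.isOpen_ball
  have hAU' : A ⊆ U' := hAΩ.trans subset_union_left
  have hxU' : x ∈ U' := mem_union_right _ (Metric.mem_ball_self (half_pos hδ))
  have hclosureU' : closure U' ⊆ K ∪ Metric.closedBall x (δ / 2) := by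
    rw [hU'def, closure_union]
    exact union_subset_union Subset.rfl Metric.closure_ball_subset_closedBall
  have hFU' : IFSApply f (closure U') ⊆ Ω := by
    intro z hz
    rcases mem_apply.1 hz with ⟨i, y, hy, rfl⟩
    rcases hclosureU' hy with h | h
    · exact hclosureF y h i
    · have hyW : y ∈ ⋂ i, f i ⁻¹' Ω := by
        apply hδball
        rw [Metric.mem_ball]
        calc dist y x ≤ δ / 2 := Metric.mem_closedBall.1 h
          _ < δ := by linarith
      exact mem_iInter.1 hyW i
  have hsub : ∀ k, (IFSApply f)^[k + 1] (closure U') ⊆ G k := by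
    intro k
    rw [Function.iterate_succ_apply]
    exact iter_mono (hFU'.trans subset_closure) k
  have hsup : ∀ k, A ⊆ (IFSApply f)^[k] (closure U') := fun k =>
    (hAG k).trans (iter_mono (closure_mono subset_union_left) k)
  have hlim' : ConleyLim f U' A := by
    rw [ConleyLim, ENNReal.tendsto_atTop_zero]
    intro η hη
    obtain ⟨N, hN⟩ := ENNReal.tendsto_atTop_zero.1 hGA η hη
    refine ⟨N + 1, fun k hk => ?_⟩
    obtain ⟨k', rfl⟩ : ∃ k', k = k' + 1 := ⟨k - 1, by omega⟩
    exact le_trans (hausdorff_sandwich (hsup (k' + 1)) (hsub k')) (hN k' (by omega))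
  exact ⟨A, hattr, fun hxA => hxΩ (hAΩ hxA), ⟨U', ⟨hU'open, hAU', hlim'⟩, hxU'⟩⟩


/-- If `x` is chain recurrent and lies in an attracting neighborhood of `A`, then `x ∈ A`. -/
lemma mem_of_chainRecurrent (hf : ∀ i, Continuous (f i)) {x : X} {A U : Set X}
    (hcr : IsChainRecurrent f x) (hA : IsCompact A) (hU : IsOpen U) (hAU : A ⊆ U)
    (hlim : ConleyLim f U A) (hxU : x ∈ U) : x ∈ A := by
  rw [ConleyLim] at hlim
  set G := fun k => (IFSApply f)^[k] (closure U) with hGdef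
  have hGne : ∀ k, (G k).Nonempty := fun k => iter_nonempty ⟨x, subset_closure hxU⟩ k
  have hAne : A.Nonempty := by
    rcases eq_empty_or_nonempty A with rfl | h
    · exfalso
      obtain ⟨k, hk⟩ := (hlim.eventually (gt_mem_nhds (by norm_num : (0:ENNReal) < 1))).exists
      change Metric.hausdorffEDist (G k) ∅ < 1 at hk
      rw [EMetric.hausdorffEdist_empty (hGne k)] at hk
      exact absurd hk (by simp)
    · exact h
  by_contra hxA
  have hρ : 0 < infDist x A := (hA.isClosed.notMem_iff_infDist_pos hAne).1 hxA
  obtain ⟨t, ht, htU⟩ := hA.exists_thickening_subset_open hU hAU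
  set s := min t (infDist x A / 2) with hsdef
  have hs : 0 < s := lt_min ht (by positivity)
  have hnearU : ∀ y : X, (∃ a ∈ A, dist y a < s) → y ∈ U := by
    rintro y ⟨a, ha, hd⟩
    exact htU (Metric.mem_thickening_iff.2 ⟨a, ha, hd.trans_le (min_le_left _ _)⟩)
  have hnear : ∃ N, ∀ k ≥ N, ∀ y ∈ G k, ∃ a ∈ A, dist y a < s / 2 := by
    have h1 := hlim.eventually (gt_mem_nhds (ENNReal.ofReal_pos.2 (half_pos hs)))
    obtain ⟨N, hN⟩ := eventually_atTop.1 h1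
    refine ⟨N, fun k hk y hy => ?_⟩
    have h2 : EMetric.infEdist y A < ENNReal.ofReal (s / 2) :=
      (EMetric.infEdist_le_hausdorffEdist_of_mem hy).trans_lt (hN k hk)
    obtain ⟨a, ha, hd⟩ := EMetric.infEdist_lt_iff.1 h2
    exact ⟨a, ha, edist_lt_ofReal.1 hd⟩
  obtain ⟨N, hN⟩ := hnear
  set m' := max N 1 with hm'def
  obtain ⟨ε, hεpos, htrack⟩ := track hf m' (half_pos hs)
  obtain ⟨n, hn, c, hc0, hcn, hsteps⟩ := hcr ε hεpos
  set c' : ℕ → X := fun i => c (i % n) with hc'def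
  have hc'x : ∀ k, c' (k * n) = x := fun k => by
    show c (k * n % n) = x
    rw [Nat.mul_mod_left]
    exact hc0
  have hc'steps : ∀ i, ∃ j, dist (c' (i + 1)) (f j (c' i)) < ε := by
    intro i
    have hr : i % n < n := Nat.mod_lt _ hn
    obtain ⟨j, hj⟩ := hsteps (i % n) hr
    refine ⟨j, ?_⟩
    have h1 : c' (i + 1) = c (i % n + 1) := by
      show c ((i + 1) % n) = c (i % n + 1)
      rcases eq_or_lt_of_le (Nat.succ_le_of_lt hr) with h | h
      · have h' : i % n + 1 = n := h
        rw [← Nat.mod_add_mod, h', Nat.mod_self, hc0, hcn]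
      · have h'' : i % n + 1 < n := h
        rw [← Nat.mod_add_mod, Nat.mod_eq_of_lt h'']
    rw [h1]
    exact hj
  -- one block of length m' starting in `closure U` ends close to `A`
  have hblock : ∀ i : ℕ, c' i ∈ closure U → ∃ a ∈ A, dist (c' (i + m')) a < s := by
    intro i hi
    obtain ⟨p, hp, hdp⟩ := htrack (fun k => c' (i + k))
      (fun k _ => hc'steps (i + k)) m' le_rfl
    have hpG : p ∈ G m' := iter_mono (singleton_subset_iff.2 hi) m' hp
    obtain ⟨a, ha, hpa⟩ := hN m' (le_max_left N 1) p hpG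
    refine ⟨a, ha, ?_⟩
    calc dist (c' (i + m')) a ≤ dist (c' (i + m')) p + dist p a := dist_triangle _ _ _
      _ < s / 2 + s / 2 := add_lt_add hdp hpa
      _ = s := add_halves s
  -- by induction, all multiples of m' (past the first) are close to `A`
  have hQ : ∀ k : ℕ, ∃ a ∈ A, dist (c' ((k + 1) * m')) a < s := by
    intro k
    induction k with
    | zero =>
      have h0 : c' 0 ∈ closure U := by
        have hx0 : c' 0 = x := by simpa using hc'x 0
        rw [hx0]
        exact subset_closure hxU
      simpa using hblock 0 h0
    | succ k ih =>
      obtain ⟨a, ha, hd⟩ := ih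
      have hmem : c' ((k + 1) * m') ∈ closure U := subset_closure (hnearU _ ⟨a, ha, hd⟩)
      have h2 := hblock ((k + 1) * m') hmem
      have harith : (k + 1) * m' + m' = (k + 1 + 1) * m' := by ring
      rwa [harith] at h2
  -- conclude: the index `n * m'` is a multiple of both `n` and `m'`
  have hn1 : n = (n - 1) + 1 := by omega
  obtain ⟨a, ha, hd⟩ := hQ (n - 1)
  rw [← hn1] at hd
  have hx' : c' (n * m') = x := by
    have := hc'x m'
    rwa [Nat.mul_comm] at this
  rw [hx'] at hd
  have hle : infDist x A ≤ dist x a := infDist_le_dist_of_mem ha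
  have : s ≤ infDist x A / 2 := min_le_right _ _
  linarith

end
end IFSAux

theorem chain_recurrent_eq_iInter_attractor_repeller {ι X : Type*} [MetricSpace X]
    [CompactSpace X] [Fintype ι] [Nonempty ι] (f : ι → X ≃ₜ X) :
    {x : X | IsChainRecurrent (fun i => (f i : X → X)) x} =
      ⋂ A ∈ {A : Set X | IsConleyAttractor (fun i => (f i : X → X)) A},
        (A ∪ (conleyBasin (fun i => (f i : X → X)) A)ᶜ) := by
  have hg : ∀ i, Continuous ((f i : X → X)) := fun i => (f i).continuous
  ext x
  simp only [Set.mem_setOf_eq, Set.mem_iInter, Set.mem_union, Set.mem_compl_iff]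
  constructor
  · intro hcr A hA
    by_cases hb : x ∈ conleyBasin (fun i => (f i : X → X)) A
    · left
      obtain ⟨U, ⟨hUopen, hAU, hlim⟩, hxU⟩ := hb
      exact IFSAux.mem_of_chainRecurrent hg hcr hA.1 hUopen hAU hlim hxU
    · right
      exact hb
  · intro h
    by_contra hcr
    obtain ⟨A, hattr, hxA, hxB⟩ := IFSAux.exists_attractor hg hcr
    rcases h A hattr with h1 | h2
    · exact hxA h1
    · exact h2 hxB
end

section
/- Let F be an invertible IFS on a compact metric space X and let x ∉ R(F) (x not chain recurrent). Then there exists a Conley attractor A of F such that x ∉ A, x lies in the basin of A, and hence x ∉ A ∪ A*. -/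
open Set Filter Metric Topology

lemma haus_sandwich {X : Type*} [MetricSpace X] {A S K : Set X}
    (h1 : A ⊆ S) (h2 : S ⊆ K) :
    EMetric.hausdorffEdist S A ≤ EMetric.hausdorffEdist K A := by
  apply EMetric.hausdorffEdist_le_of_infEdist
  · intro y hy
    exact EMetric.infEdist_le_hausdorffEdist_of_mem (h2 hy)
  · intro y hy
    simp [EMetric.infEdist_zero_of_mem (h1 hy)]

lemma tendsto_haus_iInter {X : Type*} [MetricSpace X]
    (K : ℕ → Set X) (hanti : ∀ n, K (n+1) ⊆ K n)
    (hcpt : ∀ n, IsCompact (K n)) (hne : ∀ n, (K n).Nonempty) :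
    Tendsto (fun n => EMetric.hausdorffEdist (K n) (⋂ m, K m)) atTop (𝓝 0) := by
  set A := ⋂ m, K m with hA
  have hAsub : ∀ n, A ⊆ K n := fun n => iInter_subset K n
  have hmono : ∀ m n, m ≤ n → K n ⊆ K m := by
    intro m n h
    induction n, h using Nat.le_induction with
    | base => exact subset_rfl
    | succ n hmn ih => exact (hanti n).trans ih
  rw [ENNReal.tendsto_atTop_zero]
  intro ε hε
  set V : Set X := {y | EMetric.infEdist y A < ε} with hV
  have hVopen : IsOpen V := isOpen_lt EMetric.continuous_infEdist continuous_const
  have hAV : A ⊆ V := fun a ha => by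
    simp only [hV, mem_setOf_eq, EMetric.infEdist_zero_of_mem ha]; exact lt_of_eq_of_lt (EMetric.infEdist_zero_of_mem ha) hε
  have hex : ∃ N, K N ⊆ V := by
    by_contra h
    push_neg at h
    have hne' : ∀ n, (K n \ V).Nonempty := by
      intro n
      obtain ⟨y, hy, hy'⟩ := not_subset.mp (h n)
      exact ⟨y, hy, hy'⟩
    have := IsCompact.nonempty_iInter_of_sequence_nonempty_isCompact_isClosed
      (fun n => K n \ V) (fun n => diff_subset_diff_left (hanti n)) hne'
      ((hcpt 0).diff hVopen) (fun n => (hcpt n).isClosed.sdiff hVopen)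
    obtain ⟨y, hy⟩ := this
    simp only [mem_iInter, mem_diff] at hy
    exact (hy 0).2 (hAV (mem_iInter.mpr fun n => (hy n).1))
  obtain ⟨N, hN⟩ := hex
  refine ⟨N, fun n hn => ?_⟩
  calc EMetric.hausdorffEdist (K n) A ≤ EMetric.hausdorffEdist (K N) A :=
        haus_sandwich (hAsub n) (hmono N n hn)
    _ ≤ ε := by
        apply EMetric.hausdorffEdist_le_of_infEdist
        · intro y hy
          exact le_of_lt (hN hy)
        · intro y hy
          simp [EMetric.infEdist_zero_of_mem (hAsub N hy)]

theorem not_chain_recurrent_separating_attractor {ι X : Type*} [MetricSpace X]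
    [CompactSpace X] [Fintype ι] [Nonempty ι] (f : ι → X ≃ₜ X)
    (x : X) (hx : ¬ IsChainRecurrent (fun i => (f i : X → X)) x) :
    ∃ A : Set X, IsConleyAttractor (fun i => (f i : X → X)) A ∧ x ∉ A ∧
      x ∈ conleyBasin (fun i => (f i : X → X)) A ∧
      x ∉ A ∪ (conleyBasin (fun i => (f i : X → X)) A)ᶜ := by
  set g : ι → X → X := fun i => (f i : X → X) with hg
  rw [IsChainRecurrent] at hx
  push_neg at hx
  obtain ⟨ε, hε, hchain⟩ := hx
  -- the set of endpoints of ε-chains from x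
  set U : Set X := {y | ∃ n : ℕ, 0 < n ∧ ∃ c : ℕ → X, c 0 = x ∧ c n = y ∧
      ∀ i < n, ∃ j : ι, dist (c (i + 1)) (g j (c i)) < ε} with hUdef
  -- x is not in U
  have hxU : x ∉ U := by
    rintro ⟨n, hn, c, hc0, hcn, hstep⟩
    obtain ⟨i, hi, hge⟩ := hchain n hn c hc0 hcn
    obtain ⟨j, hj⟩ := hstep i hi
    exact absurd hj (not_lt.mpr (hge j))
  -- extension lemmas
  have hext : ∀ y ∈ U, ∀ (j : ι) (z : X), dist z (g j y) < ε → z ∈ U := by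
    rintro y ⟨n, hn, c, hc0, hcn, hstep⟩ j z hz
    refine ⟨n + 1, Nat.succ_pos n, fun i => if i < n + 1 then c i else z, ?_, ?_, ?_⟩
    · simp [hc0, hn.trans (Nat.lt_succ_self n)]
    · simp
    · intro i hi
      by_cases h : i < n
      · obtain ⟨j', hj'⟩ := hstep i h
        refine ⟨j', ?_⟩
        dsimp only
        rw [if_pos (by omega : i + 1 < n + 1), if_pos (by omega : i < n + 1)]
        exact hj'
      · have heq : i = n := by omega
        subst heq
        refine ⟨j, ?_⟩
        dsimp only
        rw [if_neg (by omega : ¬ i + 1 < i + 1), if_pos (by omega : i < i + 1), hcn]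
        exact hz
  have hstart : ∀ (j : ι) (z : X), dist z (g j x) < ε → z ∈ U := by
    intro j z hz
    refine ⟨1, Nat.one_pos, fun i => if i = 0 then x else z, by simp, by simp, ?_⟩
    intro i hi
    interval_cases i
    exact ⟨j, by simpa using hz⟩
  -- U is open
  have hUopen : IsOpen U := by
    rw [Metric.isOpen_iff]
    rintro y ⟨n, hn, c, hc0, hcn, hstep⟩
    obtain ⟨j, hj⟩ := hstep (n - 1) (Nat.sub_lt hn Nat.one_pos)
    have hn1 : n - 1 + 1 = n := Nat.succ_pred_eq_of_pos hn
    rw [hn1, hcn] at hj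
    refine ⟨ε - dist y (g j (c (n - 1))), by linarith, fun z hz => ?_⟩
    rw [mem_ball] at hz
    refine ⟨n, hn, fun i => if i = n then z else c i, ?_, by simp, ?_⟩
    · dsimp only
      rw [if_neg (by omega : ¬ (0 : ℕ) = n)]
      exact hc0
    · intro i hi
      rcases eq_or_ne i (n - 1) with rfl | hne
      · refine ⟨j, ?_⟩
        dsimp only
        rw [hn1, if_pos rfl, if_neg (by omega : ¬ n - 1 = n)]
        calc dist z (g j (c (n-1))) ≤ dist z y + dist y (g j (c (n-1))) := dist_triangle _ _ _
          _ < ε := by linarith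
      · obtain ⟨j', hj'⟩ := hstep i hi
        refine ⟨j', ?_⟩
        dsimp only
        rw [if_neg (by omega : ¬ i + 1 = n), if_neg (by omega : ¬ i = n)]
        exact hj'
  -- uniform continuity modulus
  have hδ : ∃ δ > 0, ∀ (i : ι) (a b : X), dist a b < δ → dist (g i a) (g i b) < ε := by
    have h1 : ∀ i : ι, ∃ δ > 0, ∀ a b : X, dist a b < δ → dist (g i a) (g i b) < ε := by
      intro i
      have := Metric.uniformContinuous_iff.mp
        (CompactSpace.uniformContinuous_of_continuous (f i).continuous) ε hε
      obtain ⟨δ, hδ0, hδ⟩ := this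
      exact ⟨δ, hδ0, fun a b h => hδ h⟩
    choose δf hδf0 hδf using h1
    refine ⟨Finset.univ.inf' Finset.univ_nonempty δf, ?_, ?_⟩
    · exact (Finset.lt_inf'_iff _).mpr fun i _ => hδf0 i
    · intro i a b h
      exact hδf i a b (h.trans_le (Finset.inf'_le _ (Finset.mem_univ i)))
  obtain ⟨δ, hδ0, hδ⟩ := hδ
  -- the open set U'
  set U' : Set X := U ∪ ball x (δ / 2) with hU'def
  have hxU' : x ∈ U' := Or.inr (mem_ball_self (by linarith))
  have hU'open : IsOpen U' := hUopen.union isOpen_ball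
  have hUU' : U ⊆ U' := subset_union_left
  -- F(closure U') ⊆ U
  have hF : IFSApply g (closure U') ⊆ U := by
    rintro z hz
    simp only [IFSApply, mem_iUnion] at hz
    obtain ⟨i, y, hy, rfl⟩ := hz
    have hy' : y ∈ closure U ∪ closedBall x (δ / 2) := by
      rcases (closure_union (s := U) ▸ hy) with h | h
      · exact Or.inl h
      · exact Or.inr (closure_ball_subset_closedBall h)
    rcases hy' with h | h
    · obtain ⟨y', hy'U, hy'd⟩ := Metric.mem_closure_iff.mp h δ hδ0
      exact hext y' hy'U i (g i y) (hδ i y y' hy'd)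
    · have : dist y x < δ := lt_of_le_of_lt (mem_closedBall.mp h) (by linarith)
      exact hstart i (g i y) (hδ i y x this)
  -- monotonicity of IFSApply and its iterates
  have hmonoF : ∀ S T : Set X, S ⊆ T → IFSApply g S ⊆ IFSApply g T := by
    intro S T h
    exact iUnion_mono fun i => image_mono h
  have hiter : ∀ (k : ℕ) (S T : Set X), S ⊆ T → (IFSApply g)^[k] S ⊆ (IFSApply g)^[k] T := by
    intro k
    induction k with
    | zero => intro S T h; simpa using h
    | succ k ih =>
      intro S T h
      rw [Function.iterate_succ_apply, Function.iterate_succ_apply]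
      exact ih _ _ (hmonoF _ _ h)
  set K : ℕ → Set X := fun k => (IFSApply g)^[k] (closure U') with hKdef
  have hK1 : K 1 ⊆ closure U' := by
    have : K 1 = IFSApply g (closure U') := by simp [hKdef]
    rw [this]
    exact hF.trans (hUU'.trans subset_closure)
  have hK1' : IFSApply g (closure U') ⊆ closure U' := hF.trans (hUU'.trans subset_closure)
  have hKanti : ∀ k, K (k + 1) ⊆ K k := by
    intro k
    simp only [hKdef, Function.iterate_succ_apply]
    exact hiter k _ _ hK1'
  have hKcpt : ∀ k, IsCompact (K k) := by
    intro k
    induction k with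
    | zero => exact isClosed_closure.isCompact
    | succ k ih =>
      simp only [hKdef, Function.iterate_succ_apply', IFSApply]
      exact isCompact_iUnion fun i => ih.image (f i).continuous
  have hKne : ∀ k, (K k).Nonempty := by
    intro k
    induction k with
    | zero => exact ⟨x, subset_closure hxU'⟩
    | succ k ih =>
      obtain ⟨y, hy⟩ := ih
      simp only [hKdef, Function.iterate_succ_apply', IFSApply]
      obtain ⟨i⟩ := ‹Nonempty ι›
      exact ⟨g i y, mem_iUnion.mpr ⟨i, y, hy, rfl⟩⟩
  set A : Set X := ⋂ k, K k with hAdef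
  have hAcpt : IsCompact A := (isClosed_iInter fun k => (hKcpt k).isClosed).isCompact
  have hAU : A ⊆ U := by
    intro y hy
    have h1 : y ∈ K 1 := mem_iInter.mp hy 1
    have : K 1 = IFSApply g (closure U') := by simp [hKdef]
    rw [this] at h1
    exact hF h1
  have hAU' : A ⊆ U' := hAU.trans hUU'
  have hlim : ConleyLim g U' A := tendsto_haus_iInter K hKanti hKcpt hKne
  refine ⟨A, ⟨hAcpt, U', hU'open, hAU', hlim⟩, fun h => hxU (hAU h), ?_, ?_⟩
  · exact ⟨U', ⟨hU'open, hAU', hlim⟩, hxU'⟩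
  · rw [mem_union, not_or, notMem_compl_iff]
    exact ⟨fun h => hxU (hAU h), ⟨U', ⟨hU'open, hAU', hlim⟩, hxU'⟩⟩
end
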